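/- For any monotone Boolean function f : {0,1}^n → {0,1} with certificate complexity C(f) ≤ k, the function Φ_f(p) = E_p[f] is k-Lipschitz: for all q ≠ r in [0,1], (Φ_f(q) − Φ_f(r))/(q − r) ≤ k. -/

import Mathlib

open Finset

/-- Flip coordinate `i` of `x`. -/
def flipAt {n : ℕ} (x : Fin n → Bool) (i : Fin n) : Fin n → Bool :=
  Function.update x i (!x i)

/-- The `p`-biased weight (probability) of the point `x` in the product distribution
where each bit is `1` independently with probability `p`. -/
noncomputable def w {n : ℕ} (p : ℝ) (x : Fin n → Bool) : ℝ :=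
  ∏ i, if x i then p else 1 - p

/-- The `p`-biased expectation of `f`. -/
noncomputable def Ep {n : ℕ} (p : ℝ) (f : (Fin n → Bool) → Bool) : ℝ :=
  ∑ x, w p x * (if f x then 1 else 0)

/-- The `p`-biased flip influence of coordinate `i` on `f`:
`Pr_{x ∼ {0,1}^n_p}[f(x) ≠ f(x^{⊕i})]`. -/
noncomputable def flipInf {n : ℕ} (i : Fin n) (p : ℝ) (f : (Fin n → Bool) → Bool) : ℝ :=
  ∑ x, w p x * (if f (flipAt x i) ≠ f x then 1 else 0)

/-- The `p`-biased rerandomized influence of coordinate `i` on `f`: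
`2·Pr[f(x) ≠ f(x^{∼i})]`, where `x^{∼i}` has coordinate `i` resampled `p`-biased. -/
noncomputable def rerandInf {n : ℕ} (i : Fin n) (p : ℝ) (f : (Fin n → Bool) → Bool) : ℝ :=
  2 * ∑ x, ∑ b : Bool, w p x * (if b then p else 1 - p) *
    (if f (Function.update x i b) ≠ f x then 1 else 0)

/-- The `p`-biased variance of `f`. -/
noncomputable def Varp {n : ℕ} (p : ℝ) (f : (Fin n → Bool) → Bool) : ℝ :=
  Ep p f * (1 - Ep p f)

/-- The restriction of `f` fixing coordinate `i` to the bit `b`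
(viewed as a function on the full cube that ignores coordinate `i`). -/
def restrict {n : ℕ} (f : (Fin n → Bool) → Bool) (i : Fin n) (b : Bool) :
    (Fin n → Bool) → Bool :=
  fun x => f (Function.update x i b)

/-- `S` is a certificate for `f`'s value on `x`. -/
def IsCert {n : ℕ} (f : (Fin n → Bool) → Bool) (x : Fin n → Bool) (S : Finset (Fin n)) : Prop :=
  ∀ y, (∀ i ∈ S, y i = x i) → f y = f x

/-- `f` has certificate complexity at most `k`. -/
def CertLe {n : ℕ} (f : (Fin n → Bool) → Bool) (k : ℕ) : Prop :=
  ∀ x, ∃ S : Finset (Fin n), IsCert f x S ∧ S.card ≤ k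

/-! ### Auxiliary definitions and lemmas -/

noncomputable def Wo {n : ℕ} (p : ℝ) (x : Fin n → Bool) (i : Fin n) : ℝ :=
  ∏ j ∈ Finset.univ.erase i, if x j then p else 1 - p

noncomputable def piv {n : ℕ} (f : (Fin n → Bool) → Bool) (i : Fin n) (x : Fin n → Bool) : ℝ :=
  if f (Function.update x i true) ≠ f (Function.update x i false) then 1 else 0

noncomputable def D {n : ℕ} (f : (Fin n → Bool) → Bool) (p : ℝ) : ℝ :=
  ∑ x, (∑ i, Wo p x i * (if x i then (1:ℝ) else -1)) * (if f x then (1:ℝ) else 0)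

lemma w_sum {n : ℕ} (p : ℝ) : ∑ x : Fin n → Bool, w p x = 1 := by
  have h := Finset.sum_prod_piFinset (Finset.univ : Finset Bool)
    (fun (_ : Fin n) (b : Bool) => if b then p else 1 - p)
  simp only [Fintype.piFinset_univ] at h
  simp only [w]
  rw [h]
  simp

lemma w_nonneg {n : ℕ} {p : ℝ} (hp : p ∈ Set.Icc (0:ℝ) 1) (x : Fin n → Bool) : 0 ≤ w p x := by
  apply Finset.prod_nonneg
  intro i _
  rcases x i with _ | _ <;> simp <;> [linarith [hp.2]; exact hp.1]

lemma flip_invol {n : ℕ} (i : Fin n) : Function.Involutive (flipAt (n := n) · i) := by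
  intro x
  funext j
  by_cases h : j = i
  · subst h; simp [flipAt]
  · simp [flipAt, Function.update_of_ne h]

lemma Wo_flip {n : ℕ} (p : ℝ) (x : Fin n → Bool) (i : Fin n) :
    Wo p (flipAt x i) i = Wo p x i := by
  apply Finset.prod_congr rfl
  intro j hj
  rw [Finset.mem_erase] at hj
  rw [flipAt, Function.update_of_ne hj.1]

lemma piv_flip {n : ℕ} (f : (Fin n → Bool) → Bool) (i : Fin n) (x : Fin n → Bool) :
    piv f i (flipAt x i) = piv f i x := by
  simp [piv, flipAt, Function.update_idem]

lemma w_eq {n : ℕ} (p : ℝ) (x : Fin n → Bool) (i : Fin n) :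
    w p x = (if x i then p else 1 - p) * Wo p x i :=
  (Finset.mul_prod_erase Finset.univ _ (Finset.mem_univ i)).symm

lemma key_pointwise {n : ℕ} (f : (Fin n → Bool) → Bool)
    (hmono : ∀ x y : Fin n → Bool, (∀ j, x j ≤ y j) → f x ≤ f y)
    (x : Fin n → Bool) (i : Fin n) :
    (if x i then (1:ℝ) else -1) *
      ((if f x then (1:ℝ) else 0) - (if f (flipAt x i) then (1:ℝ) else 0)) = piv f i x := by
  rcases hxi : x i with _ | _
  · have h1 : Function.update x i true = flipAt x i := by simp [flipAt, hxi]
    have h2 : Function.update x i false = x := by rw [← hxi, Function.update_eq_self]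
    have hle : f x ≤ f (flipAt x i) := by
      apply hmono
      intro j
      by_cases h : j = i
      · subst h; simp [flipAt, hxi]
      · simp [flipAt, Function.update_of_ne h]
    rcases hfx : f x with _ | _ <;> rcases hff : f (flipAt x i) with _ | _ <;>
      simp [piv, h1, h2, hfx, hff] <;>
      (simp only [hfx, hff] at hle; exact absurd hle (by decide))
  · have h1 : Function.update x i true = x := by rw [← hxi, Function.update_eq_self]
    have h2 : Function.update x i false = flipAt x i := by simp [flipAt, hxi]
    have hle : f (flipAt x i) ≤ f x := by
      apply hmono
      intro j
      by_cases h : j = i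
      · subst h; simp [flipAt, hxi]
      · simp [flipAt, Function.update_of_ne h]
    rcases hfx : f x with _ | _ <;> rcases hff : f (flipAt x i) with _ | _ <;>
      simp [piv, h1, h2, hfx, hff] <;>
      (simp only [hfx, hff] at hle; exact absurd hle (by decide))

lemma per_i {n : ℕ} (f : (Fin n → Bool) → Bool)
    (hmono : ∀ x y : Fin n → Bool, (∀ j, x j ≤ y j) → f x ≤ f y)
    (p : ℝ) (i : Fin n) :
    ∑ x, Wo p x i * (if x i then (1:ℝ) else -1) * (if f x then (1:ℝ) else 0)
      = ∑ x, w p x * piv f i x := by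
  have hsum : ∀ F : (Fin n → Bool) → ℝ, ∑ x, F (flipAt x i) = ∑ x, F x := by
    intro F
    exact Fintype.sum_bijective _ (flip_invol (n := n) i).bijective _ _ (fun x => rfl)
  apply mul_left_cancel₀ (two_ne_zero (α := ℝ))
  have lhs2 : 2 * (∑ x, Wo p x i * (if x i then (1:ℝ) else -1) * (if f x then (1:ℝ) else 0))
      = ∑ x, Wo p x i * piv f i x := by
    rw [two_mul]
    nth_rewrite 1 [← hsum (fun x => Wo p x i * (if x i then (1:ℝ) else -1) * (if f x then (1:ℝ) else 0))]
    rw [← Finset.sum_add_distrib]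
    apply Finset.sum_congr rfl
    intro x _
    have hflipi : flipAt x i i = !x i := by simp [flipAt]
    rw [Wo_flip, hflipi, ← key_pointwise f hmono x i]
    rcases hxi : x i with _ | _ <;> rcases hfx : f x with _ | _ <;>
      rcases hff : f (flipAt x i) with _ | _ <;> simp [hxi, hfx, hff] <;> ring
  have rhs2 : 2 * (∑ x, w p x * piv f i x) = ∑ x, Wo p x i * piv f i x := by
    rw [two_mul]
    nth_rewrite 1 [← hsum (fun x => w p x * piv f i x)]
    rw [← Finset.sum_add_distrib]
    apply Finset.sum_congr rfl
    intro x _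
    rw [piv_flip, w_eq p x i, w_eq p (flipAt x i) i, Wo_flip]
    have hflipi : flipAt x i i = !x i := by simp [flipAt]
    rw [hflipi]
    rcases hxi : x i with _ | _ <;> simp [hxi] <;> ring
  rw [lhs2, rhs2]

lemma hasDerivAt_w {n : ℕ} (x : Fin n → Bool) (p : ℝ) :
    HasDerivAt (fun p => w p x) (∑ i, Wo p x i * (if x i then (1:ℝ) else -1)) p := by
  have h := HasDerivAt.fun_finsetProd (u := (Finset.univ : Finset (Fin n)))
    (f := fun i p => if x i then p else 1 - p)
    (f' := fun i => if x i then (1:ℝ) else -1) (x := p) ?_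
  · exact h
  · intro i _
    rcases hxi : x i with _ | _
    · simpa [hxi] using ((hasDerivAt_id p).const_sub 1)
    · exact hasDerivAt_id p

lemma hasDerivAt_Ep {n : ℕ} (f : (Fin n → Bool) → Bool) (p : ℝ) :
    HasDerivAt (fun p => Ep p f) (D f p) p := by
  exact HasDerivAt.fun_sum (u := (Finset.univ : Finset (Fin n → Bool)))
    (A := fun x p => w p x * (if f x then (1:ℝ) else 0))
    (A' := fun x => (∑ i, Wo p x i * (if x i then (1:ℝ) else -1)) * (if f x then (1:ℝ) else 0))
    (fun x _ => (hasDerivAt_w x p).mul_const _)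

lemma D_eq {n : ℕ} (f : (Fin n → Bool) → Bool)
    (hmono : ∀ x y : Fin n → Bool, (∀ j, x j ≤ y j) → f x ≤ f y) (p : ℝ) :
    D f p = ∑ x, w p x * ∑ i, piv f i x := by
  have h1 : D f p = ∑ i, ∑ x, Wo p x i * (if x i then (1:ℝ) else -1) * (if f x then (1:ℝ) else 0):= by
    rw [D, Finset.sum_comm]
    apply Finset.sum_congr rfl
    intro x _
    rw [Finset.sum_mul]
  rw [h1]
  have h2 : ∀ i, ∑ x, Wo p x i * (if x i then (1:ℝ) else -1) * (if f x then (1:ℝ) else 0)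
      = ∑ x, w p x * piv f i x := fun i => per_i f hmono p i
  rw [Finset.sum_congr rfl (fun i _ => h2 i), Finset.sum_comm]
  apply Finset.sum_congr rfl
  intro x _
  rw [Finset.mul_sum]

lemma pivcount_le {n k : ℕ} (f : (Fin n → Bool) → Bool) (hcert : CertLe f k)
    (x : Fin n → Bool) : ∑ i, piv f i x ≤ (k : ℝ) := by
  obtain ⟨S, hS, hcard⟩ := hcert x
  calc ∑ i, piv f i x ≤ ∑ i, (if i ∈ S then (1:ℝ) else 0) := by
        apply Finset.sum_le_sum
        intro i _
        by_cases hiS : i ∈ S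
        · simp only [hiS, if_true, piv]
          split <;> norm_num
        · simp only [hiS, if_false, piv]
          have ht : f (Function.update x i true) = f x := by
            apply hS
            intro j hj
            exact Function.update_of_ne (fun h => hiS (by rw [← h]; exact hj)) _ _
          have hf : f (Function.update x i false) = f x := by
            apply hS
            intro j hj
            exact Function.update_of_ne (fun h => hiS (by rw [← h]; exact hj)) _ _
          rw [ht, hf]
          simp
    _ = (S.card : ℝ) := by
        rw [Finset.sum_ite_mem, Finset.univ_inter, Finset.sum_const, nsmul_eq_mul, mul_one]
    _ ≤ (k : ℝ) := by exact_mod_cast hcard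

lemma D_bounds {n k : ℕ} (f : (Fin n → Bool) → Bool)
    (hmono : ∀ x y : Fin n → Bool, (∀ j, x j ≤ y j) → f x ≤ f y)
    (hcert : CertLe f k) {p : ℝ} (hp : p ∈ Set.Icc (0:ℝ) 1) :
    0 ≤ D f p ∧ D f p ≤ (k : ℝ) := by
  rw [D_eq f hmono p]
  constructor
  · apply Finset.sum_nonneg
    intro x _
    apply mul_nonneg (w_nonneg hp x)
    apply Finset.sum_nonneg
    intro i _
    unfold piv
    split <;> norm_num
  · calc ∑ x, w p x * ∑ i, piv f i x ≤ ∑ x, w p x * (k : ℝ) := by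
          apply Finset.sum_le_sum
          intro x _
          exact mul_le_mul_of_nonneg_left (pivcount_le f hcert x) (w_nonneg hp x)
      _ = (k : ℝ) := by rw [← Finset.sum_mul, w_sum, one_mul]

/-- For monotone `f` with certificate complexity at most `k`, the map `p ↦ E_p[f]`
is `k`-Lipschitz: all slopes are at most `k`. -/
theorem Phi_lipschitz {n k : ℕ} (f : (Fin n → Bool) → Bool)
    (hmono : ∀ x y : Fin n → Bool, (∀ j, x j ≤ y j) → f x ≤ f y)
    (hcert : CertLe f k)
    (q r : ℝ) (hq : q ∈ Set.Icc (0 : ℝ) 1) (hr : r ∈ Set.Icc (0 : ℝ) 1) (hqr : q ≠ r) :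
    (Ep q f - Ep r f) / (q - r) ≤ (k : ℝ) := by
  have hlip : ‖Ep q f - Ep r f‖ ≤ (k : ℝ) * ‖q - r‖ := by
    apply Convex.norm_image_sub_le_of_norm_hasDerivWithin_le
      (f' := fun p => D f p) (s := Set.Icc (0:ℝ) 1)
      (fun p hp => (hasDerivAt_Ep f p).hasDerivWithinAt)
      (fun p hp => ?_) (convex_Icc 0 1) hr hq
    rw [Real.norm_eq_abs, abs_of_nonneg (D_bounds f hmono hcert hp).1]
    exact (D_bounds f hmono hcert hp).2
  have hne : q - r ≠ 0 := sub_ne_zero.mpr hqr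
  calc (Ep q f - Ep r f) / (q - r) ≤ |(Ep q f - Ep r f) / (q - r)| := le_abs_self _
    _ = |Ep q f - Ep r f| / |q - r| := abs_div _ _
    _ ≤ (k : ℝ) := by
        rw [div_le_iff₀ (abs_pos.mpr hne)]
        simpa [Real.norm_eq_abs] using hlip
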